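/- Let n be a positive integer and define the Ramanujan sum c_n(q) = ∑_{1 ≤ k ≤ n, gcd(k,n)=1} e^{2πikq/n} for q ≥ 0. Then for every z ∈ ℂ with |z| > 1, the series ∑_{q=0}^∞ c_n(q)/z^{q+1} converges and equals Φ_n′(z)/Φ_n(z), the logarithmic derivative of the n-th cyclotomic polynomial at z. -/

import Mathlib

open Polynomial Real Complex

/-- The Ramanujan sum `c_n(q)`, the sum of the `q`-th powers of the primitive
`n`-th roots of unity. -/
noncomputable def ramanujanSum (n q : ℕ) : ℂ :=
  ∑ k ∈ (Finset.Icc 1 n).filter (fun k => Nat.gcd k n = 1),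
    Complex.exp (2 * Real.pi * Complex.I * k * q / n)

private lemma logDeriv_prod_X_sub_C (s : Finset ℂ) (z : ℂ) (h : ∀ μ ∈ s, z - μ ≠ 0) :
    (Polynomial.derivative (∏ μ ∈ s, (X - C μ))).eval z / (∏ μ ∈ s, (X - C μ)).eval z
      = ∑ μ ∈ s, (z - μ)⁻¹ := by
  induction s using Finset.cons_induction with
  | empty => simp
  | cons a s ha ih =>
    have hz : z - a ≠ 0 := h a (Finset.mem_cons_self _ _)
    have hs : (∏ μ ∈ s, (X - C μ)).eval z ≠ 0 := by
      rw [eval_prod]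
      exact Finset.prod_ne_zero_iff.mpr fun μ hμ => by
        simpa using h μ (Finset.mem_cons_of_mem hμ)
    rw [Finset.prod_cons, Finset.sum_cons, derivative_mul, derivative_X_sub_C, one_mul,
      eval_add, eval_mul, eval_mul, eval_sub, eval_X, eval_C,
      ← ih (fun μ hμ => h μ (Finset.mem_cons_of_mem hμ))]
    field_simp

private lemma hasSum_pow_div (z μ : ℂ) (hz : 1 < ‖z‖) (hμ : ‖μ‖ = 1) :
    HasSum (fun q : ℕ => μ ^ q / z ^ (q + 1)) (z - μ)⁻¹ := by
  have hz0 : z ≠ 0 := by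
    intro h; rw [h, norm_zero] at hz; linarith
  have hnorm : ‖μ / z‖ < 1 := by
    rw [norm_div, hμ, div_lt_one (by linarith)]
    exact hz
  have h1 := (hasSum_geometric_of_norm_lt_one hnorm).div_const z
  have hzμ : z - μ ≠ 0 := by
    intro h
    have : ‖z‖ = ‖μ‖ := by rw [sub_eq_zero.mp h]
    rw [hμ] at this; linarith
  have h1ne : 1 - μ / z ≠ 0 := by
    intro h
    rw [sub_eq_zero, eq_comm, div_eq_one_iff_eq hz0] at h
    exact hzμ (by rw [h, sub_self])
  have hfun : (fun q : ℕ => μ ^ q / z ^ (q + 1)) = fun q : ℕ => (μ / z) ^ q / z := by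
    funext q
    rw [div_pow, pow_succ, div_div]
  have hval : (1 - μ / z)⁻¹ / z = (z - μ)⁻¹ := by
    rw [div_eq_iff hz0, inv_eq_iff_eq_inv, mul_inv, inv_inv]
    field_simp
  rw [hfun, ← hval]
  exact h1

private lemma ramanujanSum_eq_sum_primitiveRoots (n q : ℕ) (hn : 0 < n) :
    ramanujanSum n q = ∑ μ ∈ primitiveRoots n ℂ, μ ^ q := by
  haveI : NeZero n := ⟨hn.ne'⟩
  have hζ : IsPrimitiveRoot (Complex.exp (2 * Real.pi * Complex.I / n)) n :=
    Complex.isPrimitiveRoot_exp n hn.ne'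
  set ζ := Complex.exp (2 * Real.pi * Complex.I / n) with hζdef
  have hexp : ∀ k : ℕ, Complex.exp (2 * Real.pi * Complex.I * k / n) = ζ ^ k := by
    intro k
    rw [hζdef, ← Complex.exp_nat_mul]
    congr 1
    ring
  refine Finset.sum_bij (fun k _ => ζ ^ k) ?_ ?_ ?_ ?_
  · intro k hk
    rw [Finset.mem_filter, Finset.mem_Icc] at hk
    exact (mem_primitiveRoots hn).2 ((hζ.pow_iff_coprime hn k).2 hk.2)
  · intro k hk j hj hkj
    rw [Finset.mem_filter, Finset.mem_Icc] at hk hj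
    rcases eq_or_lt_of_le hk.1.2 with hk2 | hk2
    · rcases eq_or_lt_of_le hj.1.2 with hj2 | hj2
      · rw [hk2, hj2]
      · exfalso
        have := hk.2
        rw [hk2, Nat.gcd_self] at this
        omega
    · rcases eq_or_lt_of_le hj.1.2 with hj2 | hj2
      · exfalso
        have := hj.2
        rw [hj2, Nat.gcd_self] at this
        omega
      · exact hζ.pow_inj hk2 hj2 hkj
  · intro μ hμ
    have hprim : IsPrimitiveRoot μ n := isPrimitiveRoot_of_mem_primitiveRoots hμ
    obtain ⟨i, hi, hζi⟩ := hζ.eq_pow_of_pow_eq_one hprim.pow_eq_one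
    have hcop : Nat.gcd i n = 1 := by
      have : IsPrimitiveRoot (ζ ^ i) n := hζi ▸ hprim
      exact (hζ.pow_iff_coprime hn i).1 this
    rcases Nat.eq_zero_or_pos i with hi0 | hi0
    · -- i = 0, so μ = 1 and n = 1
      have hn1 : n = 1 := by rw [hi0] at hcop; simpa using hcop
      refine ⟨n, ?_, ?_⟩
      · rw [Finset.mem_filter, Finset.mem_Icc, hn1]
        simp
      · show ζ ^ n = μ
        rw [hζ.pow_eq_one, ← hζi, hi0, pow_zero]
    · refine ⟨i, ?_, hζi⟩
      rw [Finset.mem_filter, Finset.mem_Icc]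
      exact ⟨⟨hi0, hi.le⟩, hcop⟩
  · intro k hk
    show Complex.exp (2 * Real.pi * Complex.I * k * q / n) = (ζ ^ k) ^ q
    rw [← pow_mul, hζdef, ← Complex.exp_nat_mul]
    congr 1
    push_cast
    ring

theorem logDeriv_cyclotomic_eq_tsum_ramanujanSum (n : ℕ) (hn : 0 < n) (z : ℂ)
    (hz : 1 < ‖z‖) :
    HasSum (fun q : ℕ => ramanujanSum n q / z ^ (q + 1))
      ((cyclotomic n ℂ).derivative.eval z / (cyclotomic n ℂ).eval z) := by
  have hζ : IsPrimitiveRoot (Complex.exp (2 * Real.pi * Complex.I / n)) n :=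
    Complex.isPrimitiveRoot_exp n hn.ne'
  have habs : ∀ μ ∈ primitiveRoots n ℂ, ‖μ‖ = 1 := fun μ hμ =>
    Complex.norm_eq_one_of_pow_eq_one (isPrimitiveRoot_of_mem_primitiveRoots hμ).pow_eq_one hn.ne'
  have hne : ∀ μ ∈ primitiveRoots n ℂ, z - μ ≠ 0 := by
    intro μ hμ h
    have : ‖z‖ = ‖μ‖ := by rw [sub_eq_zero.mp h]
    rw [habs μ hμ] at this
    linarith
  have key : HasSum (fun q : ℕ => ∑ μ ∈ primitiveRoots n ℂ, μ ^ q / z ^ (q + 1))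
      (∑ μ ∈ primitiveRoots n ℂ, (z - μ)⁻¹) :=
    hasSum_sum fun μ hμ => hasSum_pow_div z μ hz (habs μ hμ)
  rw [cyclotomic_eq_prod_X_sub_primitiveRoots hζ, logDeriv_prod_X_sub_C _ _ hne]
  convert key using 2 with q
  rw [ramanujanSum_eq_sum_primitiveRoots n q hn, Finset.sum_div]
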